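/- Let λ = (λ₁,...,λₙ) ∈ P_ε(N) and suppose i is an admissible index of Case 1 type, i.e. λᵢ ≥ λ_{i+1} + 2. Define λ^{(i)} = (λ₁-2, ..., λᵢ-2, λ_{i+1}, ..., λₙ). Then λ^{(i)} (after deleting zero parts) is a non-increasing partition of N - 2i and lies in P_ε(N - 2i). -/

import Mathlib

/-- `lam` represents a partition of `N` with `n` positive parts lying in `P_ε(N)`:
it is non-increasing, supported on `[1, n]`, sums to `N`, and every part `v`
with `ε * (-1)^v = 1` occurs with even multiplicity. -/
def IsPartitionEps (ε : ℤ) (N n : ℕ) (lam : ℕ → ℕ) : Prop :=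
  lam 0 = 0 ∧
  (∀ i, 1 ≤ i → i ≤ n → 1 ≤ lam i) ∧
  (∀ i, n < i → lam i = 0) ∧
  (∀ i, 1 ≤ i → lam (i + 1) ≤ lam i) ∧
  (∑ i ∈ Finset.Icc 1 n, lam i) = N ∧
  (∀ v, 1 ≤ v → ε * (-1) ^ v = 1 →
    Even ((Finset.Icc 1 n).filter fun i => lam i = v).card)

/-- `i ∈ Δ(λ)`: `i` is a 2-step of `lam`, with the self-paired conditions
`i = i'` and `i+1 = (i+1)'` encoded by the parity criterion `ε(-1)^{λᵢ} = -1`. -/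
def IsDeltaIdx (ε : ℤ) (lam : ℕ → ℕ) (i : ℕ) : Prop :=
  1 ≤ i ∧ ε * (-1) ^ lam i = -1 ∧ ε * (-1) ^ lam (i + 1) = -1 ∧
    lam (i - 1) ≠ lam i ∧ lam (i + 1) ≤ lam i ∧ lam (i + 1) ≠ lam (i + 2)

instance (ε : ℤ) (lam : ℕ → ℕ) : DecidablePred (IsDeltaIdx ε lam) := fun i => by
  unfold IsDeltaIdx; infer_instance

/-- `λ_{i-1} - λᵢ` is a positive even number (a bad left boundary for the 2-step at `i`). -/
def BadLeft (lam : ℕ → ℕ) (i : ℕ) : Prop :=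
  0 < lam (i - 1) - lam i ∧ Even (lam (i - 1) - lam i)

/-- `λ_{i+1} - λ_{i+2}` is a positive even number (a bad right boundary for the 2-step at `i`). -/
def BadRight (lam : ℕ → ℕ) (i : ℕ) : Prop :=
  0 < lam (i + 1) - lam (i + 2) ∧ Even (lam (i + 1) - lam (i + 2))

instance (lam : ℕ → ℕ) : DecidablePred (BadLeft lam) := fun i => by
  unfold BadLeft; infer_instance

instance (lam : ℕ → ℕ) : DecidablePred (BadRight lam) := fun i => by
  unfold BadRight; infer_instance

/-- `(i, i+1)` is a bad 2-step of `lam`. -/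
def IsBadStep (ε : ℤ) (lam : ℕ → ℕ) (i : ℕ) : Prop :=
  IsDeltaIdx ε lam i ∧ (BadLeft lam i ∨ BadRight lam i)

instance (ε : ℤ) (lam : ℕ → ℕ) : DecidablePred (IsBadStep ε lam) := fun i => by
  unfold IsBadStep; infer_instance

/-- `(i, i+1)` is a good 2-step of `lam`. -/
def IsGoodStep (ε : ℤ) (lam : ℕ → ℕ) (i : ℕ) : Prop :=
  IsDeltaIdx ε lam i ∧ ¬ BadLeft lam i ∧ ¬ BadRight lam i

/-- `lam` is non-singular: it has no bad 2-steps. -/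
def NonSingular (ε : ℤ) (lam : ℕ → ℕ) : Prop := ∀ i, ¬ IsBadStep ε lam i

/-- Case 1 of the Kempken–Spaltenstein algorithm occurs at `i`: `λᵢ ≥ λ_{i+1} + 2`. -/
def Case1At (lam : ℕ → ℕ) (i : ℕ) : Prop := 1 ≤ i ∧ lam (i + 1) + 2 ≤ lam i

/-- Case 2 of the Kempken–Spaltenstein algorithm occurs at `i`: `i ∈ Δ(λ)` and `λᵢ = λ_{i+1}`. -/
def Case2At (ε : ℤ) (lam : ℕ → ℕ) (i : ℕ) : Prop :=
  IsDeltaIdx ε lam i ∧ lam i = lam (i + 1)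

/-- The Case 1 move: subtract `2` from the first `i` parts. -/
def case1 (lam : ℕ → ℕ) (i : ℕ) : ℕ → ℕ := fun j =>
  if 1 ≤ j ∧ j ≤ i then lam j - 2 else lam j

/-- The Case 2 move: subtract `2` from the first `i - 1` parts and `1` from parts `i`, `i+1`. -/
def case2 (lam : ℕ → ℕ) (i : ℕ) : ℕ → ℕ := fun j =>
  if 1 ≤ j ∧ j < i then lam j - 2 else if j = i ∨ j = i + 1 then lam j - 1 else lam j

/-- One step of the KS algorithm at index `i` (Case 1 and Case 2 are mutually exclusive). -/
def ksApply (lam : ℕ → ℕ) (i : ℕ) : ℕ → ℕ :=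
  if lam (i + 1) + 2 ≤ lam i then case1 lam i else case2 lam i

/-- Iterated application of the KS algorithm along a list of indices: `λ^𝐢`. -/
def ksIter (lam : ℕ → ℕ) : List ℕ → ℕ → ℕ
  | [] => lam
  | i :: t => ksIter (ksApply lam i) t

/-- `𝐢` is an admissible sequence for `lam`: at each stage, Case 1 or Case 2 occurs
at the next index. -/
def AdmissibleSeq (ε : ℤ) (lam : ℕ → ℕ) : List ℕ → Prop
  | [] => True
  | i :: t => (Case1At lam i ∨ Case2At ε lam i) ∧ AdmissibleSeq ε (ksApply lam i) t

/-- `s(λ) = Σᵢ ⌊(λᵢ - λ_{i+1})/2⌋`. -/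
def sFun (n : ℕ) (lam : ℕ → ℕ) : ℕ := ∑ i ∈ Finset.Icc 1 n, (lam i - lam (i + 1)) / 2

/-- `|Δ(λ)|`, the number of 2-steps. -/
def deltaCard (ε : ℤ) (n : ℕ) (lam : ℕ → ℕ) : ℕ :=
  ((Finset.Icc 1 n).filter (IsDeltaIdx ε lam)).card

/-- `|Δ_bad(λ)|`, the number of bad 2-steps. -/
def badCard (ε : ℤ) (n : ℕ) (lam : ℕ → ℕ) : ℕ :=
  ((Finset.Icc 1 n).filter (IsBadStep ε lam)).card

/-- The good 2-cluster `i, i+2, ..., i+2(k-1)` (with `k ≥ 2` elements): a chain of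
2-steps at distance `2` with neither boundary difference a positive even number. -/
def IsGoodCluster (ε : ℤ) (lam : ℕ → ℕ) (i k : ℕ) : Prop :=
  2 ≤ k ∧ (∀ j, j < k → IsDeltaIdx ε lam (i + 2 * j)) ∧
    ¬ BadLeft lam i ∧ ¬ BadRight lam (i + 2 * (k - 1))

instance (ε : ℤ) (lam : ℕ → ℕ) (i k : ℕ) : Decidable (IsGoodCluster ε lam i k) := by
  unfold IsGoodCluster; infer_instance

/-- `|Σ(λ)|`, the number of good 2-clusters. -/
def goodClusterCard (ε : ℤ) (n : ℕ) (lam : ℕ → ℕ) : ℕ :=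
  ((Finset.Icc 1 n ×ˢ Finset.Icc 2 n).filter fun p => IsGoodCluster ε lam p.1 p.2).card

/-- `c(λ) = s(λ) + |Δ(λ)|`. -/
def cInt (ε : ℤ) (n : ℕ) (lam : ℕ → ℕ) : ℤ :=
  (sFun n lam : ℤ) + (deltaCard ε n lam : ℤ)

/-- `z(λ) = s(λ) + |Δ(λ)| - (|Δ_bad(λ)| - |Σ(λ)|)`. -/
def zInt (ε : ℤ) (n : ℕ) (lam : ℕ → ℕ) : ℤ :=
  (sFun n lam : ℤ) + (deltaCard ε n lam : ℤ) -
    ((badCard ε n lam : ℤ) - (goodClusterCard ε n lam : ℤ))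

/-- Closure of `P_ε` under Case 1 of the KS algorithm: if `λ ∈ P_ε(N)` and
`λᵢ ≥ λ_{i+1} + 2`, then `λ^{(i)} = (λ₁-2, …, λᵢ-2, λ_{i+1}, …, λₙ)` (after
deleting zero parts, i.e. for a suitable number `n' ≤ n` of parts) is a
non-increasing partition of `N - 2i` lying in `P_ε(N - 2i)`. -/
theorem case1_mem_PartitionEps (ε : ℤ) (hε : ε = 1 ∨ ε = -1) (N n : ℕ)
    (lam : ℕ → ℕ) (hpart : IsPartitionEps ε N n lam)
    (i : ℕ) (hi : 1 ≤ i) (hcase1 : lam (i + 1) + 2 ≤ lam i) :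
    ∃ n', n' ≤ n ∧ IsPartitionEps ε (N - 2 * i) n' (case1 lam i) := by
  obtain ⟨h0, hpos, hzero, hmono, hsum, hpar⟩ := hpart
  -- antitone of lam on [1, ∞)
  have h_anti : ∀ a b, 1 ≤ a → a ≤ b → lam b ≤ lam a := by
    intro a b ha hab
    induction hab with
    | refl => exact le_rfl
    | @step b hab ih => exact le_trans (hmono b (le_trans ha hab)) ih
  have hin : i ≤ n := by
    by_contra h
    push_neg at h
    have := hzero i h
    omega
  set L := lam (i + 1) with hL
  have hge : ∀ j, 1 ≤ j → j ≤ i → L + 2 ≤ lam j := fun j h1 h2 =>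
    le_trans hcase1 (h_anti j i h1 h2)
  have hle : ∀ j, i + 1 ≤ j → lam j ≤ L := fun j hj => h_anti (i + 1) j (by omega) hj
  set μ := case1 lam i with hμ
  have hμle : ∀ j, 1 ≤ j → j ≤ i → μ j = lam j - 2 := by
    intro j h1 h2; simp [hμ, case1, h1, h2]
  have hμgt : ∀ j, i < j → μ j = lam j := by
    intro j hj
    simp only [hμ, case1, if_neg (by omega : ¬ (1 ≤ j ∧ j ≤ i))]
  have hμ0 : μ 0 = 0 := by
    simp [hμ, case1, h0]
  have hμmono : ∀ j, 1 ≤ j → μ (j + 1) ≤ μ j := by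
    intro j hj
    rcases le_or_gt (j + 1) i with h | h
    · rw [hμle (j+1) (by omega) h, hμle j hj (by omega)]
      have := hmono j hj
      omega
    · rcases le_or_gt j i with h2 | h2
      · have hji : j = i := by omega
        rw [hμgt (j+1) (by omega), hμle j hj h2, hji]
        omega
      · rw [hμgt (j+1) (by omega), hμgt j h2]
        exact hmono j hj
  have hμanti : ∀ a b, 1 ≤ a → a ≤ b → μ b ≤ μ a := by
    intro a b ha hab
    induction hab with
    | refl => exact le_rfl
    | @step b hab ih => exact le_trans (hμmono b (le_trans ha hab)) ih
  have hμzero : ∀ j, n < j → μ j = 0 := by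
    intro j hj
    rw [hμgt j (by omega)]
    exact hzero j hj
  set n' := Nat.findGreatest (fun j => 1 ≤ μ j) n with hn'
  have hn'n : n' ≤ n := Nat.findGreatest_le n
  refine ⟨n', hn'n, ?_, ?_, ?_, ?_, ?_, ?_⟩
  · exact hμ0
  · intro j h1 h2
    have hn'pos : n' ≠ 0 := by omega
    have hPn' : 1 ≤ μ n' := Nat.findGreatest_of_ne_zero (P := fun j => 1 ≤ μ j) hn'.symm hn'pos
    exact le_trans hPn' (hμanti j n' h1 h2)
  · intro j hj
    rcases le_or_gt j n with h | h
    · by_contra hne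
      exact Nat.findGreatest_is_greatest (P := fun j => 1 ≤ μ j) hj h (show 1 ≤ μ j by omega)
    · exact hμzero j h
  · intro j hj; exact hμmono j hj
  · -- the sum
    have hsub : ∑ j ∈ Finset.Icc 1 n', μ j = ∑ j ∈ Finset.Icc 1 n, μ j := by
      refine Finset.sum_subset (Finset.Icc_subset_Icc_right hn'n) ?_
      intro j hjn hjn'
      simp only [Finset.mem_Icc] at hjn hjn'
      rcases le_or_gt j n with h | h
      · rcases le_or_gt j n' with h2 | h2
        · omega
        · by_contra hne
          exact Nat.findGreatest_is_greatest (P := fun j => 1 ≤ μ j) h2 h (show 1 ≤ μ j by omega)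
      · exact hμzero j h
    have hico : Finset.Icc 1 n = Finset.Ioc 0 i ∪ Finset.Ioc i n := by
      rw [Finset.Ioc_union_Ioc_eq_Ioc (Nat.zero_le i) hin, ← Finset.Icc_add_one_left_eq_Ioc]; rfl
    have hdisj : Disjoint (Finset.Ioc 0 i) (Finset.Ioc i n) :=
      Finset.disjoint_left.mpr (by intro a ha hb; simp only [Finset.mem_Ioc] at ha hb; omega)
    have hsplitμ : ∑ j ∈ Finset.Icc 1 n, μ j
        = ∑ j ∈ Finset.Ioc 0 i, μ j + ∑ j ∈ Finset.Ioc i n, μ j := by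
      rw [hico, Finset.sum_union hdisj]
    have hsplitlam : ∑ j ∈ Finset.Icc 1 n, lam j
        = ∑ j ∈ Finset.Ioc 0 i, lam j + ∑ j ∈ Finset.Ioc i n, lam j := by
      rw [hico, Finset.sum_union hdisj]
    have hright : ∑ j ∈ Finset.Ioc i n, μ j = ∑ j ∈ Finset.Ioc i n, lam j := by
      refine Finset.sum_congr rfl ?_
      intro j hj
      simp only [Finset.mem_Ioc] at hj
      exact hμgt j hj.1
    have hleft : ∑ j ∈ Finset.Ioc 0 i, μ j + 2 * i = ∑ j ∈ Finset.Ioc 0 i, lam j := by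
      have h2i : 2 * i = ∑ _j ∈ Finset.Ioc 0 i, 2 := by
        rw [Finset.sum_const, Nat.card_Ioc, smul_eq_mul]
        omega
      rw [h2i, ← Finset.sum_add_distrib]
      refine Finset.sum_congr rfl ?_
      intro j hj
      simp only [Finset.mem_Ioc] at hj
      have := hge j hj.1 hj.2
      rw [hμle j hj.1 hj.2]
      omega
    omega
  · -- parity condition
    intro v hv1 hvpar
    have hfe : (Finset.Icc 1 n').filter (fun j => μ j = v)
        = (Finset.Icc 1 n).filter (fun j => μ j = v) := by
      apply Finset.Subset.antisymm
      · exact Finset.filter_subset_filter _ (Finset.Icc_subset_Icc_right hn'n)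
      · intro j hj
        simp only [Finset.mem_filter, Finset.mem_Icc] at hj ⊢
        refine ⟨⟨hj.1.1, ?_⟩, hj.2⟩
        by_contra h
        push_neg at h
        rcases le_or_gt j n with h2 | h2
        · exact Nat.findGreatest_is_greatest (P := fun j => 1 ≤ μ j) h h2 (show 1 ≤ μ j by omega)
        · omega
    have hico : Finset.Icc 1 n = Finset.Ioc 0 i ∪ Finset.Ioc i n := by
      rw [Finset.Ioc_union_Ioc_eq_Ioc (Nat.zero_le i) hin, ← Finset.Icc_add_one_left_eq_Ioc]; rfl
    have hdisj : Disjoint (Finset.Ioc 0 i) (Finset.Ioc i n) :=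
      Finset.disjoint_left.mpr (by intro a ha hb; simp only [Finset.mem_Ioc] at ha hb; omega)
    have hsplit : ∀ (f : ℕ → ℕ) (w : ℕ), ((Finset.Icc 1 n).filter (fun j => f j = w)).card
        = ((Finset.Ioc 0 i).filter (fun j => f j = w)).card
          + ((Finset.Ioc i n).filter (fun j => f j = w)).card := by
      intro f w
      rw [hico, Finset.filter_union,
        Finset.card_union_of_disjoint (Finset.disjoint_filter_filter hdisj)]
    have hCLnew : ((Finset.Ioc 0 i).filter (fun j => μ j = v))
        = ((Finset.Ioc 0 i).filter (fun j => lam j = v + 2)) := by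
      refine Finset.filter_congr ?_
      intro j hj
      simp only [Finset.mem_Ioc] at hj
      have h2 := hge j hj.1 hj.2
      rw [hμle j hj.1 hj.2]
      omega
    have hCRnew : ((Finset.Ioc i n).filter (fun j => μ j = v))
        = ((Finset.Ioc i n).filter (fun j => lam j = v)) := by
      refine Finset.filter_congr ?_
      intro j hj
      simp only [Finset.mem_Ioc] at hj
      rw [hμgt j hj.1]
    have hCL0 : ∀ w, w ≤ L + 1 → ((Finset.Ioc 0 i).filter (fun j => lam j = w)) = ∅ := by
      intro w hw
      rw [Finset.filter_eq_empty_iff]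
      intro j hj
      simp only [Finset.mem_Ioc] at hj
      have := hge j hj.1 hj.2
      omega
    have hCR0 : ∀ w, L + 1 ≤ w → ((Finset.Ioc i n).filter (fun j => lam j = w)) = ∅ := by
      intro w hw
      rw [Finset.filter_eq_empty_iff]
      intro j hj
      simp only [Finset.mem_Ioc] at hj
      have := hle j hj.1
      omega
    have hpar2 : ε * (-1) ^ (v + 2) = 1 := by
      rw [pow_add]
      have h2 : ((-1 : ℤ)) ^ 2 = 1 := by norm_num
      rw [h2, mul_one]
      exact hvpar
    have hCLeven : Even ((Finset.Ioc 0 i).filter (fun j => lam j = v + 2)).card := by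
      rcases le_or_gt (v + 2) (L + 1) with h | h
      · rw [hCL0 _ h]; simp
      · have := hpar (v + 2) (by omega) hpar2
        rw [hsplit lam (v + 2), hCR0 (v + 2) (by omega)] at this
        simpa using this
    have hCReven : Even ((Finset.Ioc i n).filter (fun j => lam j = v)).card := by
      rcases le_or_gt (L + 1) v with h | h
      · rw [hCR0 _ h]; simp
      · have := hpar v hv1 hvpar
        rw [hsplit lam v, hCL0 v (by omega)] at this
        simpa using this
    rw [hfe, hsplit μ v, hCLnew, hCRnew]
    exact hCLeven.add hCReven
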